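/- Incremental bound on the candidate activation (intermediate claim in the proof of Theorem 2): fix λ̌ ≥ 1 and set σ̌_f = σ(‖[W_f λ̌U_f b_f]‖_∞). Let r(u,x) = tanh(W_r u + U_r (f(u,x) ∘ x) + b_r) with f(u,x) = σ(W_f u + U_f x + b_f). Then for all u_a, u_b ∈ ℝ^{n_u} with ‖u_a‖_∞ ≤ 1 and ‖u_b‖_∞ ≤ 1 and all x_a, x_b ∈ ℝ^{n_x} with ‖x_a‖_∞ ≤ λ̌ and ‖x_b‖_∞ ≤ λ̌, it holds that ‖r(u_a,x_a) − r(u_b,x_b)‖_∞ ≤ ‖W_r‖_∞ ‖u_a − u_b‖_∞ + ‖U_r‖_∞ ( (1/4) λ̌ ‖W_f‖_∞ ‖u_a − u_b‖_∞ + (1/4) λ̌ ‖U_f‖_∞ ‖x_a − x_b‖_∞ + σ̌_f ‖x_a − x_b‖_∞ ). -/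

import Mathlib

open Real

/-- The _root_.sigmoid activation function. -/
noncomputable def sigmoid (s : ℝ) : ℝ := 1 / (1 + Real.exp (-s))

/-- Induced infinity norm of a matrix (maximum absolute row sum). -/
noncomputable def matNorm {n m : ℕ} (A : Matrix (Fin n) (Fin m) ℝ) : ℝ :=
  ⨆ i, ∑ j, |A i j|

/-- Infinity norm of the horizontal concatenation `[A B c]`. -/
noncomputable def catNorm {n m p : ℕ} (A : Matrix (Fin n) (Fin m) ℝ)
    (B : Matrix (Fin n) (Fin p) ℝ) (c : Fin n → ℝ) : ℝ :=
  ⨆ i, (∑ j, |A i j| + ∑ j, |B i j| + |c i|)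

lemma sigmoid_nonneg (s : ℝ) : 0 ≤ _root_.sigmoid s := by
  unfold _root_.sigmoid
  positivity

lemma sigmoid_mono : Monotone _root_.sigmoid := by
  intro a b hab
  unfold _root_.sigmoid
  apply one_div_le_one_div_of_le
  · positivity
  · have := Real.exp_le_exp.2 (neg_le_neg hab)
    linarith

lemma hasDerivAt_sigmoid (s : ℝ) :
    HasDerivAt _root_.sigmoid (Real.exp (-s) / (1 + Real.exp (-s)) ^ 2) s := by
  have h1 : HasDerivAt (fun x : ℝ => 1 + Real.exp (-x)) (-Real.exp (-s)) s := by
    have := (Real.hasDerivAt_exp (-s)).comp s (hasDerivAt_neg s)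
    simpa using (this.const_add 1)
  have hne : (1 + Real.exp (-s)) ≠ 0 := by positivity
  have := (hasDerivAt_const s (1:ℝ)).div h1 hne
  exact this.congr_deriv (by ring)

lemma abs_sigmoid_sub (a b : ℝ) : |_root_.sigmoid a - _root_.sigmoid b| ≤ (1/4) * |a - b| := by
  have := Convex.norm_image_sub_le_of_norm_hasDerivWithin_le
    (f := _root_.sigmoid) (f' := fun s => Real.exp (-s) / (1 + Real.exp (-s)) ^ 2)
    (s := Set.univ) (C := 1/4) (x := b) (y := a)
    (fun x _ => (_root_.hasDerivAt_sigmoid x).hasDerivWithinAt)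
    (fun x _ => by
      rw [Real.norm_eq_abs, abs_of_nonneg (by positivity)]
      rw [div_le_iff₀ (by positivity)]
      nlinarith [Real.exp_pos (-x), sq_nonneg (1 - Real.exp (-x))])
    convex_univ trivial trivial
  simpa [Real.norm_eq_abs] using this

lemma abs_tanh_sub (a b : ℝ) : |Real.tanh a - Real.tanh b| ≤ |a - b| := by
  have hd : ∀ x : ℝ, HasDerivAt Real.tanh (1 / Real.cosh x ^ 2) x := by
    intro x
    have h := (Real.hasDerivAt_sinh x).div (Real.hasDerivAt_cosh x) (Real.cosh_pos x).ne'
    have : (Real.cosh x * Real.cosh x - Real.sinh x * Real.sinh x) / Real.cosh x ^ 2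
        = 1 / Real.cosh x ^ 2 := by
      rw [show Real.cosh x * Real.cosh x - Real.sinh x * Real.sinh x = 1 by
        nlinarith [Real.cosh_sq_sub_sinh_sq x]]
    have hteq : Real.tanh = fun y => Real.sinh y / Real.cosh y :=
      funext fun y => Real.tanh_eq_sinh_div_cosh y
    rw [hteq, ← this]
    exact h
  have := Convex.norm_image_sub_le_of_norm_hasDerivWithin_le
    (f := Real.tanh) (f' := fun x => 1 / Real.cosh x ^ 2)
    (s := Set.univ) (C := 1) (x := b) (y := a)
    (fun x _ => (hd x).hasDerivWithinAt)
    (fun x _ => by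
      rw [Real.norm_eq_abs, abs_of_nonneg (by positivity)]
      rw [div_le_one (by positivity)]
      nlinarith [Real.one_le_cosh x])
    convex_univ trivial trivial
  simpa [Real.norm_eq_abs] using this

lemma row_le_matNorm {n m : ℕ} (A : Matrix (Fin n) (Fin m) ℝ) (i : Fin n) :
    ∑ j, |A i j| ≤ matNorm A := by
  unfold matNorm
  exact le_ciSup (f := fun i => ∑ j, |A i j|) (Set.Finite.bddAbove (Set.finite_range _)) i

lemma matNorm_nonneg {n m : ℕ} (A : Matrix (Fin n) (Fin m) ℝ) : 0 ≤ matNorm A := by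
  rcases Nat.eq_zero_or_pos n with h | h
  · subst h
    simp [matNorm, Real.iSup_of_isEmpty]
  · exact le_trans (Finset.sum_nonneg fun j _ => abs_nonneg _)
      (row_le_matNorm A ⟨0, h⟩)

lemma row_le_catNorm {n m p : ℕ} (A : Matrix (Fin n) (Fin m) ℝ)
    (B : Matrix (Fin n) (Fin p) ℝ) (c : Fin n → ℝ) (i : Fin n) :
    ∑ j, |A i j| + ∑ j, |B i j| + |c i| ≤ catNorm A B c := by
  unfold catNorm
  exact le_ciSup (f := fun i => ∑ j, |A i j| + ∑ j, |B i j| + |c i|)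
    (Set.Finite.bddAbove (Set.finite_range _)) i

lemma abs_mulVec_le {n m : ℕ} (A : Matrix (Fin n) (Fin m) ℝ) (v : Fin m → ℝ) (i : Fin n) :
    |A.mulVec v i| ≤ (∑ j, |A i j|) * ‖v‖ := by
  rw [Matrix.mulVec, dotProduct, Finset.sum_mul]
  refine le_trans (Finset.abs_sum_le_sum_abs _ _) (Finset.sum_le_sum fun j _ => ?_)
  rw [abs_mul]
  exact mul_le_mul_of_nonneg_left (by simpa using norm_le_pi_norm v j) (abs_nonneg _)

/-- **Incremental bound on the candidate activation (proof of Theorem 2).**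
For `r(u,x) = tanh(W_r u + U_r (f(u,x) ∘ x) + b_r)`, `f(u,x) = σ(W_f u + U_f x + b_f)`,
`σ̌_f = σ(‖[W_f λ̌U_f b_f]‖_∞)`, with `‖u_{a,b}‖_∞ ≤ 1` and `‖x_{a,b}‖_∞ ≤ λ̌`:
`‖r(u_a,x_a) - r(u_b,x_b)‖_∞ ≤ ‖W_r‖_∞ ‖u_a - u_b‖_∞ +
  ‖U_r‖_∞ ((1/4) λ̌ ‖W_f‖_∞ ‖u_a - u_b‖_∞ + (1/4) λ̌ ‖U_f‖_∞ ‖x_a - x_b‖_∞ +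
    σ̌_f ‖x_a - x_b‖_∞)`. -/
theorem gru_candidate_activation_incremental_bound {nu nx : ℕ}
    (Wf Wr : Matrix (Fin nx) (Fin nu) ℝ) (Uf Ur : Matrix (Fin nx) (Fin nx) ℝ)
    (bf br : Fin nx → ℝ)
    (lam : ℝ) (hlam : 1 ≤ lam)
    (ua ub : Fin nu → ℝ) (hua : ‖ua‖ ≤ 1) (hub : ‖ub‖ ≤ 1)
    (xa xb : Fin nx → ℝ) (hxa : ‖xa‖ ≤ lam) (hxb : ‖xb‖ ≤ lam) :
    ‖(fun i => Real.tanh ((Wr.mulVec ua +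
          Ur.mulVec ((fun j => _root_.sigmoid ((Wf.mulVec ua + Uf.mulVec xa + bf) j)) * xa) +
          br) i)) -
        (fun i => Real.tanh ((Wr.mulVec ub +
          Ur.mulVec ((fun j => _root_.sigmoid ((Wf.mulVec ub + Uf.mulVec xb + bf) j)) * xb) +
          br) i))‖ ≤
      matNorm Wr * ‖ua - ub‖ +
        matNorm Ur * ((1 / 4) * lam * matNorm Wf * ‖ua - ub‖ +
          (1 / 4) * lam * matNorm Uf * ‖xa - xb‖ +
          _root_.sigmoid (catNorm Wf (lam • Uf) bf) * ‖xa - xb‖) := by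
  have hlam0 : (0:ℝ) ≤ lam := le_trans zero_le_one hlam
  set sa : Fin nx → ℝ := Wf.mulVec ua + Uf.mulVec xa + bf with hsa
  set sb : Fin nx → ℝ := Wf.mulVec ub + Uf.mulVec xb + bf with hsb
  set ga : Fin nx → ℝ := (fun j => _root_.sigmoid (sa j)) * xa with hga
  set gb : Fin nx → ℝ := (fun j => _root_.sigmoid (sb j)) * xb with hgb
  set σc : ℝ := _root_.sigmoid (catNorm Wf (lam • Uf) bf) with hσc
  set G : ℝ := (1 / 4) * lam * matNorm Wf * ‖ua - ub‖ +
      (1 / 4) * lam * matNorm Uf * ‖xa - xb‖ + σc * ‖xa - xb‖ with hG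
  -- componentwise bound on ga - gb
  have hσc0 : 0 ≤ σc := sigmoid_nonneg _
  have hG0 : 0 ≤ G := by
    rw [hG]
    have h1 : (0:ℝ) ≤ (1/4) * lam * matNorm Wf * ‖ua - ub‖ := by
      have := matNorm_nonneg Wf; positivity
    have h2 : (0:ℝ) ≤ (1/4) * lam * matNorm Uf * ‖xa - xb‖ := by
      have := matNorm_nonneg Uf; positivity
    have h3 : (0:ℝ) ≤ σc * ‖xa - xb‖ := mul_nonneg hσc0 (norm_nonneg _)
    linarith
  have hgj : ∀ j, |ga j - gb j| ≤ G := by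
    intro j
    have hxaj : |xa j| ≤ lam := le_trans (by simpa using norm_le_pi_norm xa j) hxa
    -- bound on _root_.sigmoid step
    have hs_diff : |sa j - sb j| ≤ matNorm Wf * ‖ua - ub‖ + matNorm Uf * ‖xa - xb‖ := by
      have h1 : sa j - sb j = Wf.mulVec (ua - ub) j + Uf.mulVec (xa - xb) j := by
        simp [hsa, hsb, Matrix.mulVec_sub]
        ring
      rw [h1]
      refine le_trans (abs_add_le _ _) (add_le_add ?_ ?_)
      · exact le_trans (abs_mulVec_le Wf (ua - ub) j)
          (mul_le_mul_of_nonneg_right (row_le_matNorm Wf j) (norm_nonneg _))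
      · exact le_trans (abs_mulVec_le Uf (xa - xb) j)
          (mul_le_mul_of_nonneg_right (row_le_matNorm Uf j) (norm_nonneg _))
    -- σ(sb j) ≤ σc
    have hσb : _root_.sigmoid (sb j) ≤ σc := by
      apply sigmoid_mono
      have h1 : sb j ≤ |sb j| := le_abs_self _
      have h2 : |sb j| ≤ ∑ k, |Wf j k| + ∑ k, |(lam • Uf) j k| + |bf j| := by
        have hWb : |Wf.mulVec ub j| ≤ ∑ k, |Wf j k| := by
          have := abs_mulVec_le Wf ub j
          calc |Wf.mulVec ub j| ≤ (∑ k, |Wf j k|) * ‖ub‖ := this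
            _ ≤ (∑ k, |Wf j k|) * 1 :=
              mul_le_mul_of_nonneg_left hub (Finset.sum_nonneg fun _ _ => abs_nonneg _)
            _ = ∑ k, |Wf j k| := mul_one _
        have hUb : |Uf.mulVec xb j| ≤ ∑ k, |(lam • Uf) j k| := by
          have h3 : ∀ k, |(lam • Uf) j k| = lam * |Uf j k| := by
            intro k
            simp [Matrix.smul_apply, abs_mul, abs_of_nonneg hlam0]
          calc |Uf.mulVec xb j| ≤ (∑ k, |Uf j k|) * ‖xb‖ := abs_mulVec_le Uf xb j
            _ ≤ (∑ k, |Uf j k|) * lam :=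
              mul_le_mul_of_nonneg_left hxb (Finset.sum_nonneg fun _ _ => abs_nonneg _)
            _ = ∑ k, |(lam • Uf) j k| := by
              rw [Finset.sum_mul]
              exact Finset.sum_congr rfl fun k _ => by rw [h3 k]; ring
        calc |sb j| ≤ |Wf.mulVec ub j + Uf.mulVec xb j| + |bf j| := by
              simpa [hsb] using abs_add_le (Wf.mulVec ub j + Uf.mulVec xb j) (bf j)
          _ ≤ (|Wf.mulVec ub j| + |Uf.mulVec xb j|) + |bf j| :=
              add_le_add_left (abs_add_le _ _) _
          _ ≤ ∑ k, |Wf j k| + ∑ k, |(lam • Uf) j k| + |bf j| := by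
              have := add_le_add (add_le_add hWb hUb) (le_refl |bf j|)
              linarith
      exact le_trans h1 (le_trans h2 (row_le_catNorm Wf (lam • Uf) bf j))
    have hxdj : |xa j - xb j| ≤ ‖xa - xb‖ := by simpa using norm_le_pi_norm (xa - xb) j
    have key : ga j - gb j = (_root_.sigmoid (sa j) - _root_.sigmoid (sb j)) * xa j
        + _root_.sigmoid (sb j) * (xa j - xb j) := by
      simp [hga, hgb]; ring
    calc |ga j - gb j|
        ≤ |_root_.sigmoid (sa j) - _root_.sigmoid (sb j)| * |xa j| + _root_.sigmoid (sb j) * |xa j - xb j| := by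
          rw [key]
          refine le_trans (abs_add_le _ _) ?_
          rw [abs_mul, abs_mul, abs_of_nonneg (_root_.sigmoid_nonneg _)]
      _ ≤ ((1/4) * |sa j - sb j|) * lam + σc * ‖xa - xb‖ := by
          refine add_le_add ?_ ?_
          · exact mul_le_mul (abs_sigmoid_sub _ _) hxaj (abs_nonneg _) (by positivity)
          · exact mul_le_mul hσb hxdj (abs_nonneg _) hσc0
      _ ≤ ((1/4) * (matNorm Wf * ‖ua - ub‖ + matNorm Uf * ‖xa - xb‖)) * lam
            + σc * ‖xa - xb‖ := by
          have : (1/4) * |sa j - sb j| ≤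
              (1/4) * (matNorm Wf * ‖ua - ub‖ + matNorm Uf * ‖xa - xb‖) := by linarith
          exact add_le_add (mul_le_mul_of_nonneg_right this hlam0) (le_refl _)
      _ = G := by rw [hG]; ring
  have hgnorm : ‖ga - gb‖ ≤ G := by
    rw [pi_norm_le_iff_of_nonneg hG0]
    intro j
    simpa using hgj j
  -- final bound
  have hRHS0 : 0 ≤ matNorm Wr * ‖ua - ub‖ + matNorm Ur * G := by
    have h1 := mul_nonneg (matNorm_nonneg Wr) (norm_nonneg (ua - ub))
    have h2 := mul_nonneg (matNorm_nonneg Ur) hG0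
    linarith
  rw [show matNorm Wr * ‖ua - ub‖ +
        matNorm Ur * ((1 / 4) * lam * matNorm Wf * ‖ua - ub‖ +
          (1 / 4) * lam * matNorm Uf * ‖xa - xb‖ +
          σc * ‖xa - xb‖) = matNorm Wr * ‖ua - ub‖ + matNorm Ur * G from by rw [hG]]
  rw [pi_norm_le_iff_of_nonneg hRHS0]
  intro i
  have hsplit : (Wr.mulVec ua + Ur.mulVec ga + br) i - (Wr.mulVec ub + Ur.mulVec gb + br) i
      = Wr.mulVec (ua - ub) i + Ur.mulVec (ga - gb) i := by
    simp [Matrix.mulVec_sub]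
    ring
  calc ‖((fun i => Real.tanh ((Wr.mulVec ua + Ur.mulVec ga + br) i)) -
          (fun i => Real.tanh ((Wr.mulVec ub + Ur.mulVec gb + br) i))) i‖
      = |Real.tanh ((Wr.mulVec ua + Ur.mulVec ga + br) i)
          - Real.tanh ((Wr.mulVec ub + Ur.mulVec gb + br) i)| := by
        simp [Real.norm_eq_abs]
    _ ≤ |(Wr.mulVec ua + Ur.mulVec ga + br) i - (Wr.mulVec ub + Ur.mulVec gb + br) i| :=
        abs_tanh_sub _ _
    _ = |Wr.mulVec (ua - ub) i + Ur.mulVec (ga - gb) i| := by rw [hsplit]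
    _ ≤ |Wr.mulVec (ua - ub) i| + |Ur.mulVec (ga - gb) i| := abs_add_le _ _
    _ ≤ matNorm Wr * ‖ua - ub‖ + matNorm Ur * G := by
        refine add_le_add ?_ ?_
        · exact le_trans (abs_mulVec_le Wr (ua - ub) i)
            (mul_le_mul_of_nonneg_right (row_le_matNorm Wr i) (norm_nonneg _))
        · refine le_trans (abs_mulVec_le Ur (ga - gb) i) ?_
          calc (∑ j, |Ur i j|) * ‖ga - gb‖ ≤ matNorm Ur * ‖ga - gb‖ :=
                mul_le_mul_of_nonneg_right (row_le_matNorm Ur i) (norm_nonneg _)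
            _ ≤ matNorm Ur * G := mul_le_mul_of_nonneg_left hgnorm (matNorm_nonneg Ur)
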